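/- Let A(n) = ⌊nφ⌋ and B(n) = ⌊nφ²⌋ for n ≥ 1. Let U be any nonempty composition of the sequences A and B (i.e., U = C₁ ∘ C₂ ∘ … ∘ C_m with each C_ℓ ∈ {A, B}, m ≥ 1), containing i occurrences of A and j occurrences of B. Then there exists an integer constant λ_U such that for all n ≥ 1, U(n) = F_{i+2j}·A(n) + F_{i+2j−1}·n − λ_U. -/

import Mathlib

noncomputable def phi : ℝ := (1 + Real.sqrt 5) / 2

/-- The lower Wythoff sequence `A(n) = ⌊nφ⌋`, as a map `ℕ → ℕ`. -/
noncomputable def wA (n : ℕ) : ℕ := ⌊(n : ℝ) * phi⌋₊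

/-- The upper Wythoff sequence `B(n) = ⌊nφ²⌋`, as a map `ℕ → ℕ`. -/
noncomputable def wB (n : ℕ) : ℕ := ⌊(n : ℝ) * phi ^ 2⌋₊

private lemma sqrt5_sq : Real.sqrt 5 ^ 2 = 5 := Real.sq_sqrt (by norm_num)

private lemma one_lt_phi : 1 < phi := by
  have h : (2:ℝ) < Real.sqrt 5 := by nlinarith [sqrt5_sq, Real.sqrt_nonneg 5]
  unfold phi; linarith

private lemma phi_lt_two : phi < 2 := by
  have h : Real.sqrt 5 < 3 := by nlinarith [sqrt5_sq, Real.sqrt_nonneg 5]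
  unfold phi; linarith

private lemma phi_sq : phi ^ 2 = phi + 1 := by
  unfold phi; nlinarith [sqrt5_sq]

private lemma irr_phi : Irrational phi := by
  have h5 : Irrational (Real.sqrt 5) := by
    have := Nat.Prime.irrational_sqrt (p := 5) (by norm_num)
    simpa using this
  have h1 : Irrational (1 + Real.sqrt 5) := by
    simpa using h5.ratCast_add 1
  have h2 : Irrational ((1/2 : ℚ) * (1 + Real.sqrt 5)) := h1.ratCast_mul (by norm_num)
  have : ((1/2 : ℚ) : ℝ) * (1 + Real.sqrt 5) = phi := by
    push_cast; unfold phi; ring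
  rwa [this] at h2

private lemma phi_nonneg : (0:ℝ) ≤ phi := by linarith [one_lt_phi]

private lemma wA_cast (m : ℕ) : (wA m : ℤ) = ⌊(m:ℝ) * phi⌋ := by
  unfold wA
  exact Int.natCast_floor_eq_floor (mul_nonneg (by positivity) phi_nonneg)

private lemma wA_bounds (n : ℕ) (hn : 1 ≤ n) :
    ((wA n : ℝ)) < (n:ℝ) * phi ∧ (n:ℝ) * phi < (wA n : ℝ) + 1 := by
  have hnn : (0:ℝ) ≤ (n:ℝ) * phi := mul_nonneg (by positivity) phi_nonneg
  have hle : ((wA n : ℝ)) ≤ (n:ℝ) * phi := Nat.floor_le hnn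
  have hirr : Irrational ((n:ℝ) * phi) := irr_phi.natCast_mul (by omega)
  constructor
  · rcases lt_or_eq_of_le hle with h | h
    · exact h
    · exact absurd h.symm (hirr.ne_nat (wA n))
  · exact Nat.lt_floor_add_one _

private lemma wB_eq (n : ℕ) : wB n = wA n + n := by
  unfold wA wB
  rw [phi_sq, mul_add, mul_one, Nat.floor_add_natCast (mul_nonneg (by positivity) phi_nonneg)]

private lemma wA_pos (n : ℕ) (hn : 1 ≤ n) : 1 ≤ wA n := by
  apply Nat.le_floor
  have h : (1:ℝ) ≤ (n:ℝ) := by exact_mod_cast hn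
  push_cast
  nlinarith [one_lt_phi]

private lemma hAA (n : ℕ) (hn : 1 ≤ n) : (wA (wA n) : ℤ) = (wA n : ℤ) + n - 1 := by
  obtain ⟨h1, h2⟩ := wA_bounds n hn
  rw [wA_cast]
  apply Int.floor_eq_iff.mpr
  constructor <;> push_cast <;> nlinarith [one_lt_phi, phi_lt_two, phi_sq]

private lemma hAB (n : ℕ) (hn : 1 ≤ n) : (wA (wB n) : ℤ) = 2 * (wA n : ℤ) + n := by
  obtain ⟨h1, h2⟩ := wA_bounds n hn
  rw [wB_eq, wA_cast]
  apply Int.floor_eq_iff.mpr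
  constructor <;> push_cast <;> nlinarith [one_lt_phi, phi_lt_two, phi_sq]

private lemma foldr_comp (L : List Bool) (g : ℕ → ℕ) :
    L.foldr (fun b f => (if b then wA else wB) ∘ f) g
      = (L.foldr (fun b f => (if b then wA else wB) ∘ f) id) ∘ g := by
  induction L with
  | nil => rfl
  | cons a L ih => simp [List.foldr_cons, ih, Function.comp_assoc]

private lemma fold_concat (L : List Bool) (b : Bool) (n : ℕ) :
    (L ++ [b]).foldr (fun b f => (if b then wA else wB) ∘ f) id n
      = L.foldr (fun b f => (if b then wA else wB) ∘ f) id ((if b then wA else wB) n) := by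
  rw [List.foldr_append, foldr_comp]
  rfl

/-- Carlitz–Scoville–Hoggatt: any nonempty composition `U = C₁ ∘ ⋯ ∘ C_m` of the
sequences `A` and `B` (encoded by a nonempty list of Booleans, `true ↦ A`, `false ↦ B`),
containing `i` occurrences of `A` and `j` occurrences of `B`, satisfies
`U(n) = F_{i+2j} A(n) + F_{i+2j-1} n − λ_U` for all `n ≥ 1`, for some integer constant `λ_U`. -/
theorem carlitz_scoville_hoggatt (L : List Bool) (hL : L ≠ []) :
    ∃ lam : ℤ, ∀ n : ℕ, 1 ≤ n →
      (((L.foldr (fun b f => (if b then wA else wB) ∘ f) (id : ℕ → ℕ)) n : ℕ) : ℤ)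
        = (Nat.fib (L.count true + 2 * L.count false) : ℤ) * (wA n : ℤ)
          + (Nat.fib (L.count true + 2 * L.count false - 1) : ℤ) * (n : ℤ) - lam := by
  induction L using List.reverseRecOn with
  | nil => exact absurd rfl hL
  | append_singleton L b ih =>
    by_cases hL' : L = []
    · subst hL'
      cases b
      · -- [false] : B
        refine ⟨0, fun n hn => ?_⟩
        simp only [List.nil_append, List.foldr_cons, List.foldr_nil, Function.comp_apply, Bool.false_eq_true, if_false, id_eq]
        have h : (wB n : ℤ) = (wA n : ℤ) + n := by rw [wB_eq]; push_cast; ring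
        rw [h]
        norm_num [List.count_cons]
        try ring
      · -- [true] : A
        refine ⟨0, fun n hn => ?_⟩
        simp only [List.nil_append, List.foldr_cons, List.foldr_nil, Function.comp_apply, if_true, id_eq]
        norm_num [List.count_cons]
    · obtain ⟨lam, hlam⟩ := ih hL'
      have hk1 : 1 ≤ L.count true + 2 * L.count false := by
        cases L with
        | nil => exact absurd rfl hL'
        | cons a t =>
          cases a <;> simp [List.count_cons] <;> omega
      obtain ⟨m, hm⟩ : ∃ m, L.count true + 2 * L.count false = m + 1 :=
        ⟨L.count true + 2 * L.count false - 1, by omega⟩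
      rw [hm] at hlam
      cases b
      · -- append B : k' = k + 2
        refine ⟨lam, fun n hn => ?_⟩
        have hwB1 : 1 ≤ wB n := by rw [wB_eq]; omega
        have h1 := hlam (wB n) hwB1
        rw [fold_concat]
        simp only [Bool.false_eq_true, if_false]
        have hct : (L ++ [false]).count true = L.count true := by simp
        have hcf : (L ++ [false]).count false = L.count false + 1 := by simp
        rw [hct, hcf]
        have hkk : L.count true + 2 * (L.count false + 1) = m + 3 := by omega
        rw [hkk]
        have hAB' := hAB n hn
        have hBB : (wB n : ℤ) = (wA n : ℤ) + n := by rw [wB_eq]; push_cast; ring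
        have hfib1 : (Nat.fib (m+3) : ℤ) = Nat.fib (m+2) + Nat.fib (m+1) := by
          rw [Nat.fib_add_two]; push_cast; ring
        have hfib2 : (Nat.fib (m+2) : ℤ) = Nat.fib (m+1) + Nat.fib m := by
          rw [Nat.fib_add_two]; push_cast; ring
        have hm3 : m + 3 - 1 = m + 2 := by omega
        have hm1 : m + 1 - 1 = m := by omega
        rw [hm3]
        rw [hm1] at h1
        rw [h1, hAB', hBB, hfib1, hfib2]
        ring
      · -- append A : k' = k + 1
        refine ⟨lam + Nat.fib (m+1), fun n hn => ?_⟩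
        have hwA1 := wA_pos n hn
        have h1 := hlam (wA n) hwA1
        rw [fold_concat]
        rw [if_pos rfl]
        have hct : (L ++ [true]).count true = L.count true + 1 := by simp
        have hcf : (L ++ [true]).count false = L.count false := by simp
        rw [hct, hcf]
        have hkk : L.count true + 1 + 2 * L.count false = m + 2 := by omega
        rw [hkk]
        have hAA' := hAA n hn
        have hfib2 : (Nat.fib (m+2) : ℤ) = Nat.fib (m+1) + Nat.fib m := by
          rw [Nat.fib_add_two]; push_cast; ring
        have hm2 : m + 2 - 1 = m + 1 := by omega
        have hm1 : m + 1 - 1 = m := by omega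
        rw [hm2]
        rw [hm1] at h1
        rw [h1, hAA', hfib2]
        ring
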